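/- Let H be a complex Hilbert space. Let D : H → H be a bounded self-adjoint invertible operator, ψ ∈ H a unit vector with D ψ = λ_D • ψ for some real λ_D < 0, and ω > 0 such that Re ⟪D v, v⟫ ≥ ω ‖v‖² for every v orthogonal to ψ. Let 0 < β₋ ≤ β₊, let f : ℝ → ℝ be continuous with β₋ ≤ f(t) ≤ β₊ for all t ∈ ℝ, and let λ > −β₋ be real. Let φ ∈ H satisfy that ⟪φ, ψ⟫ is a positive real number γ, and let u ∈ H satisfy the constraint ⟪u, D⁻¹((cfc f D) + λ I) φ⟫ = 0. Writing u⊥ := u − ⟪u, ψ⟫ • ψ and φ⊥ := φ − γ • ψ, one has |⟪u, ψ⟫| ≤ (|λ_D| (β₊ + λ)) / ((β₋ + λ) γ) · sqrt( Re ⟪D⁻¹ u⊥, u⊥⟫ · Re ⟪D⁻¹ φ⊥, φ⊥⟫ ). -/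

import Mathlib

open scoped InnerProductSpace

section Aux

variable {H : Type*} [NormedAddCommGroup H] [InnerProductSpace ℂ H] [CompleteSpace H]

private lemma gspb_comm_inv (D Dinv T : H →L[ℂ] H)
    (h1 : D * Dinv = 1) (h2 : Dinv * D = 1) (h : T * D = D * T) :
    T * Dinv = Dinv * T := by
  calc T * Dinv = Dinv * D * (T * Dinv) := by rw [h2, one_mul]
    _ = Dinv * (D * T) * Dinv := by simp only [mul_assoc]
    _ = Dinv * (T * D) * Dinv := by rw [← h]
    _ = Dinv * T * (D * Dinv) := by simp only [mul_assoc]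
    _ = Dinv * T := by rw [h1, mul_one]

private lemma gspb_cfc_comm (D : H →L[ℂ] H) (hD : IsSelfAdjoint D)
    (g : ℝ → ℝ) (hg : Continuous g) : cfc g D * D = D * cfc g D := by
  have hid : cfc (id : ℝ → ℝ) D = D := cfc_id ℝ D hD
  calc cfc g D * D = cfc g D * cfc (id : ℝ → ℝ) D := by rw [hid]
    _ = cfc (fun t => g t * id t) D := (cfc_mul g id D hg.continuousOn continuousOn_id).symm
    _ = cfc (fun t => id t * g t) D := cfc_congr (fun t _ => mul_comm (g t) (id t))
    _ = cfc (id : ℝ → ℝ) D * cfc g D := cfc_mul id g D continuousOn_id hg.continuousOn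
    _ = D * cfc g D := by rw [hid]

omit [CompleteSpace H] in
private lemma gspb_eigen (D : H →L[ℂ] H)
    (ψ : H) (hψ : ‖ψ‖ = 1) (lamD : ℝ) (hlamD : lamD < 0) (hDψ : D ψ = (lamD : ℂ) • ψ)
    (ω : ℝ) (hω : 0 < ω)
    (hgap : ∀ v : H, ⟪ψ, v⟫_ℂ = 0 → ω * ‖v‖ ^ 2 ≤ (⟪v, D v⟫_ℂ).re)
    (T : H →L[ℂ] H) (hcomm : T * D = D * T) :
    T ψ = ⟪ψ, T ψ⟫_ℂ • ψ := by
  have hψψ : ⟪ψ, ψ⟫_ℂ = 1 := by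
    have := inner_self_eq_norm_sq_to_K (𝕜 := ℂ) ψ
    rw [hψ] at this; simpa using this
  set w : H := T ψ - ⟪ψ, T ψ⟫_ℂ • ψ with hw
  have hwK : ⟪ψ, w⟫_ℂ = 0 := by
    simp [hw, inner_sub_right, inner_smul_right, hψψ, hψ]
  have hDw : D w = (lamD : ℂ) • w := by
    have h1 : T (D ψ) = D (T ψ) := by
      have := congrArg (fun S : H →L[ℂ] H => S ψ) hcomm
      simpa [ContinuousLinearMap.mul_apply] using this
    have h2 : D (T ψ) = (lamD : ℂ) • T ψ := by
      rw [← h1, hDψ, map_smul]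
    rw [hw, map_sub, h2, map_smul, hDψ, smul_sub]
    rw [smul_comm]
  have hre : (⟪w, D w⟫_ℂ).re = lamD * ‖w‖ ^ 2 := by
    rw [hDw, inner_smul_right]
    have : (⟪w, w⟫_ℂ) = ((‖w‖ : ℂ) ^ 2) := inner_self_eq_norm_sq_to_K w
    rw [this, ← Complex.ofReal_pow, ← Complex.ofReal_mul, Complex.ofReal_re]
  have hg := hgap w hwK
  rw [hre] at hg
  have hw0 : ‖w‖ ^ 2 = 0 := by nlinarith [sq_nonneg ‖w‖]
  have : w = 0 := by
    have := pow_eq_zero_iff (n := 2) (by norm_num) |>.mp hw0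
    simpa [norm_eq_zero] using this
  have h0 : T ψ - ⟪ψ, T ψ⟫_ℂ • ψ = 0 := this
  linear_combination (norm := module) h0

private lemma gspb_invariant (D : H →L[ℂ] H)
    (ψ : H) (hψ : ‖ψ‖ = 1) (lamD : ℝ) (hlamD : lamD < 0) (hDψ : D ψ = (lamD : ℂ) • ψ)
    (ω : ℝ) (hω : 0 < ω)
    (hgap : ∀ v : H, ⟪ψ, v⟫_ℂ = 0 → ω * ‖v‖ ^ 2 ≤ (⟪v, D v⟫_ℂ).re)
    (T : H →L[ℂ] H) (hT : IsSelfAdjoint T) (hcomm : T * D = D * T)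
    (v : H) (hv : ⟪ψ, v⟫_ℂ = 0) : ⟪ψ, T v⟫_ℂ = 0 := by
  have hsym : ∀ a b : H, ⟪T a, b⟫_ℂ = ⟪a, T b⟫_ℂ := fun a b => hT.isSymmetric a b
  have h1 : ⟪ψ, T v⟫_ℂ = ⟪T ψ, v⟫_ℂ := (hsym ψ v).symm
  rw [h1, gspb_eigen D ψ hψ lamD hlamD hDψ ω hω hgap T hcomm, inner_smul_left, hv, mul_zero]

omit [CompleteSpace H] in
private lemma gspb_cs (P : H →L[ℂ] H) (hsym : ∀ a b : H, ⟪P a, b⟫_ℂ = ⟪a, P b⟫_ℂ) (x y : H)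
    (hpos : ∀ a b : ℂ, 0 ≤ (⟪a • x + b • y, P (a • x + b • y)⟫_ℂ).re) :
    ‖⟪x, P y⟫_ℂ‖ ^ 2 ≤ (⟪x, P x⟫_ℂ).re * (⟪y, P y⟫_ℂ).re := by
  set m := ⟪x, P y⟫_ℂ with hm
  have hyx : ⟪y, P x⟫_ℂ = (starRingEnd ℂ) m := by
    rw [hm, ← hsym y x]
    exact ((inner_conj_symm (P y) x).symm : ⟪P y, x⟫_ℂ = (starRingEnd ℂ) ⟪x, P y⟫_ℂ)
  have hxx : (⟪x, P x⟫_ℂ).im = 0 := by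
    have h2 : (starRingEnd ℂ) ⟪x, P x⟫_ℂ = ⟪x, P x⟫_ℂ :=
      (inner_conj_symm (P x) x).trans (hsym x x)
    have h3 := congrArg Complex.im h2
    rw [Complex.conj_im] at h3; linarith
  have hyy : (⟪y, P y⟫_ℂ).im = 0 := by
    have h2 : (starRingEnd ℂ) ⟪y, P y⟫_ℂ = ⟪y, P y⟫_ℂ :=
      (inner_conj_symm (P y) y).trans (hsym y y)
    have h3 := congrArg Complex.im h2
    rw [Complex.conj_im] at h3; linarith
  have key : ∀ a b : ℂ, (⟪a • x + b • y, P (a • x + b • y)⟫_ℂ).re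
      = ‖a‖ ^ 2 * (⟪x, P x⟫_ℂ).re + 2 * ((starRingEnd ℂ) a * b * m).re
        + ‖b‖ ^ 2 * (⟪y, P y⟫_ℂ).re := by
    intro a b
    simp only [map_add, map_smul, inner_add_left, inner_add_right,
      inner_smul_left, inner_smul_right, hyx, ← hm]
    simp only [Complex.add_re, Complex.add_im, Complex.mul_re, Complex.mul_im,
      Complex.conj_re, Complex.conj_im, Complex.sq_norm,
      Complex.normSq_apply, hxx, hyy]
    ring
  by_cases hm0 : m = 0
  · have h1 := hpos 1 0
    have h2 := hpos 0 1
    simp only [one_smul, zero_smul, add_zero, zero_add] at h1 h2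
    rw [hm0]
    simpa using mul_nonneg h1 h2
  · set b : ℂ := (starRingEnd ℂ) m / ‖m‖ with hb
    have hmn : (0:ℝ) < ‖m‖ := norm_pos_iff.mpr hm0
    have hbm : b * m = (‖m‖ : ℂ) := by
      have hcm : (starRingEnd ℂ) m * m = ((‖m‖ ^ 2 : ℝ) : ℂ) := by
        rw [mul_comm, Complex.mul_conj, Complex.normSq_eq_norm_sq]
        try push_cast
        try ring
      rw [hb, div_mul_eq_mul_div, hcm,
        div_eq_iff (by exact_mod_cast hmn.ne' : ((‖m‖ : ℝ) : ℂ) ≠ 0)]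
      push_cast
      try ring
    have hbn : ‖b‖ = 1 := by
      have hcn : ‖(starRingEnd ℂ) m‖ = ‖m‖ := RCLike.norm_conj m
      rw [hb, norm_div, hcn, Complex.norm_real, Real.norm_eq_abs, abs_of_pos hmn,
        div_self hmn.ne']
    have hq : ∀ t : ℝ, 0 ≤ (⟪x, P x⟫_ℂ).re * (t * t) + (2 * ‖m‖) * t + (⟪y, P y⟫_ℂ).re := by
      intro t
      have h := hpos (t : ℂ) b
      rw [key] at h
      have h1 : ((starRingEnd ℂ) (t : ℂ) * b * m).re = t * ‖m‖ := by
        rw [Complex.conj_ofReal, mul_assoc, hbm, ← Complex.ofReal_mul, Complex.ofReal_re]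
      have h2 : ‖(t : ℂ)‖ ^ 2 = t * t := by
        rw [Complex.norm_real, Real.norm_eq_abs, pow_two, abs_mul_abs_self]
      rw [h1, h2, hbn] at h
      nlinarith [h]
    have hd := discrim_le_zero hq
    have hd' : (2 * ‖m‖) ^ 2 - 4 * ((⟪x, P x⟫_ℂ).re) * ((⟪y, P y⟫_ℂ).re) ≤ 0 := by
      simpa [discrim] using hd
    nlinarith [hd']

end Aux

set_option maxHeartbeats 1000000 in
/-- The projection bound on the ground-state component from the proof of Lemma 2.6
(DDC-lower). -/
theorem ground_state_projection_bound
    {H : Type*} [NormedAddCommGroup H] [InnerProductSpace ℂ H] [CompleteSpace H]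
    (D Dinv : H →L[ℂ] H) (hD : IsSelfAdjoint D)
    (hD1 : D.comp Dinv = ContinuousLinearMap.id ℂ H)
    (hD2 : Dinv.comp D = ContinuousLinearMap.id ℂ H)
    (ψ : H) (hψ : ‖ψ‖ = 1) (lamD : ℝ) (hlamD : lamD < 0) (hDψ : D ψ = lamD • ψ)
    (ω : ℝ) (hω : 0 < ω)
    (hgap : ∀ v : H, ⟪ψ, v⟫_ℂ = 0 → ω * ‖v‖ ^ 2 ≤ (⟪v, D v⟫_ℂ).re)
    (βlo βhi : ℝ) (hβlo : 0 < βlo) (hββ : βlo ≤ βhi)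
    (f : ℝ → ℝ) (hf : Continuous f) (hfb : ∀ t : ℝ, βlo ≤ f t ∧ f t ≤ βhi)
    (lam : ℝ) (hlam : -βlo < lam)
    (φ : H) (γ : ℝ) (hγ : 0 < γ) (hφψ : ⟪ψ, φ⟫_ℂ = (γ : ℂ))
    (u : H)
    (hconstraint : ⟪Dinv ((cfc f D) φ + (lam : ℂ) • φ), u⟫_ℂ = 0) :
    ‖⟪ψ, u⟫_ℂ‖ ≤
      (|lamD| * (βhi + lam)) / ((βlo + lam) * γ) *
        Real.sqrt
          ((⟪u - ⟪ψ, u⟫_ℂ • ψ, Dinv (u - ⟪ψ, u⟫_ℂ • ψ)⟫_ℂ).re *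
            (⟪φ - (γ : ℂ) • ψ, Dinv (φ - (γ : ℂ) • ψ)⟫_ℂ).re) := by
  have h1 : D * Dinv = 1 := hD1
  have h2 : Dinv * D = 1 := hD2
  have hψψ : ⟪ψ, ψ⟫_ℂ = 1 := by
    have := inner_self_eq_norm_sq_to_K (𝕜 := ℂ) ψ
    rw [hψ] at this; simpa using this
  have hDψ' : D ψ = (lamD : ℂ) • ψ := by
    rw [hDψ]; exact (Complex.coe_smul lamD ψ).symm
  have hlam' : (0:ℝ) < βlo + lam := by linarith
  have hlam'' : (0:ℝ) < βhi + lam := by linarith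
  set g : ℝ → ℝ := fun t => f t + lam with hgdef
  have hgc : Continuous g := by fun_prop
  have hglo : ∀ t, βlo + lam ≤ g t := fun t => by
    have := (hfb t).1; simp only [hgdef]; linarith
  have hghi : ∀ t, g t ≤ βhi + lam := fun t => by
    have := (hfb t).2; simp only [hgdef]; linarith
  set A := cfc g D with hAdef
  have hA_sa : IsSelfAdjoint A := cfc_predicate g D
  have hDinv_sa : IsSelfAdjoint Dinv := by
    show star Dinv = Dinv
    have h3 : star Dinv * D = 1 := by
      have := congrArg star h1
      rwa [star_mul, star_one, hD.star_eq] at this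
    calc star Dinv = star Dinv * (D * Dinv) := by rw [h1, mul_one]
      _ = (star Dinv * D) * Dinv := by rw [mul_assoc]
      _ = Dinv := by rw [h3, one_mul]
  have hAD : A * D = D * A := gspb_cfc_comm D hD g hgc
  have hADinv : A * Dinv = Dinv * A := gspb_comm_inv D Dinv A h1 h2 hAD
  have hDinvD : Dinv * D = D * Dinv := h2.trans h1.symm
  have hsymA : ∀ v w : H, ⟪A v, w⟫_ℂ = ⟪v, A w⟫_ℂ := fun v w => hA_sa.isSymmetric v w
  have hsymD : ∀ v w : H, ⟪D v, w⟫_ℂ = ⟪v, D w⟫_ℂ := fun v w => hD.isSymmetric v w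
  have hsymDinv : ∀ v w : H, ⟪Dinv v, w⟫_ℂ = ⟪v, Dinv w⟫_ℂ :=
    fun v w => hDinv_sa.isSymmetric v w
  have hKA : ∀ v, ⟪ψ, v⟫_ℂ = 0 → ⟪ψ, A v⟫_ℂ = 0 :=
    gspb_invariant D ψ hψ lamD hlamD hDψ' ω hω hgap A hA_sa hAD
  have hKDinv : ∀ v, ⟪ψ, v⟫_ℂ = 0 → ⟪ψ, Dinv v⟫_ℂ = 0 :=
    gspb_invariant D ψ hψ lamD hlamD hDψ' ω hω hgap Dinv hDinv_sa hDinvD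
  have happ : ∀ (S T : H →L[ℂ] H) (v : H), (S * T) v = S (T v) := fun S T v => rfl
  have hDinvψ : Dinv ψ = ((lamD : ℂ))⁻¹ • ψ := by
    have e1 : Dinv (D ψ) = ψ := by
      have := congrArg (fun S : H →L[ℂ] H => S ψ) h2
      simpa [ContinuousLinearMap.mul_apply] using this
    rw [hDψ', map_smul] at e1
    have hne : (lamD : ℂ) ≠ 0 := Complex.ofReal_ne_zero.mpr hlamD.ne
    exact ((inv_smul_eq_iff₀ hne).mpr e1.symm).symm
  have hposK : ∀ v, ⟪ψ, v⟫_ℂ = 0 → 0 ≤ (⟪v, Dinv v⟫_ℂ).re := by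
    intro v hv
    have hwK : ⟪ψ, Dinv v⟫_ℂ = 0 := hKDinv v hv
    have hvD : v = D (Dinv v) := by
      have := congrArg (fun S : H →L[ℂ] H => S v) h1
      simpa [ContinuousLinearMap.mul_apply] using this.symm
    have e : ⟪v, Dinv v⟫_ℂ = ⟪Dinv v, D (Dinv v)⟫_ℂ := by
      rw [← hsymDinv v v]
      exact congrArg (fun z => ⟪Dinv v, z⟫_ℂ) hvD
    calc (0:ℝ) ≤ ω * ‖Dinv v‖ ^ 2 := by positivity
      _ ≤ (⟪Dinv v, D (Dinv v)⟫_ℂ).re := hgap _ hwK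
      _ = (⟪v, Dinv v⟫_ℂ).re := by rw [← e]
  have hAψ : A ψ = ⟪ψ, A ψ⟫_ℂ • ψ :=
    gspb_eigen D ψ hψ lamD hlamD hDψ' ω hω hgap A hAD
  set cA := ⟪ψ, A ψ⟫_ℂ with hcAdef
  have hcA_conj : (starRingEnd ℂ) cA = cA :=
    (inner_conj_symm (A ψ) ψ).trans (hsymA ψ ψ)
  set r := cA.re with hrdef
  have hcA_re : ((r : ℝ) : ℂ) = cA := Complex.conj_eq_iff_re.mp hcA_conj
  -- `algebraMap` applied to a vector
  have hAlg : ∀ (c : ℝ) (v : H), (algebraMap ℝ (H →L[ℂ] H) c) v = (c : ℂ) • v := by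
    intro c v
    rw [Algebra.algebraMap_eq_smul_one, ContinuousLinearMap.smul_apply,
      ContinuousLinearMap.one_apply, ← Complex.coe_smul]
  -- lower bound on r
  have hrlo : βlo + lam ≤ r := by
    set s : ℝ → ℝ := fun t => Real.sqrt (g t - (βlo + lam)) with hsdef
    have hsc : Continuous s := by
      simp only [hsdef]; fun_prop
    set S := cfc s D with hSdef
    have hsymS : ∀ v w : H, ⟪S v, w⟫_ℂ = ⟪v, S w⟫_ℂ :=
      fun v w => (cfc_predicate s D : IsSelfAdjoint S).isSymmetric v w
    have hS2 : S * S = A - algebraMap ℝ (H →L[ℂ] H) (βlo + lam) := by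
      calc S * S = cfc (fun t => s t * s t) D :=
            (cfc_mul s s D hsc.continuousOn hsc.continuousOn).symm
        _ = cfc (fun t => g t - (βlo + lam)) D :=
            cfc_congr (fun t _ => Real.mul_self_sqrt (by have := hglo t; linarith))
        _ = cfc g D - cfc (fun _ => βlo + lam) D :=
            cfc_sub g (fun _ => βlo + lam) D hgc.continuousOn continuousOn_const
        _ = A - algebraMap ℝ (H →L[ℂ] H) (βlo + lam) := by rw [cfc_const (βlo + lam) D hD]
    have e2 : (S * S) ψ = A ψ - ((βlo + lam : ℝ) : ℂ) • ψ := by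
      rw [hS2, ContinuousLinearMap.sub_apply, hAlg]
    have e3 : (⟪ψ, (S * S) ψ⟫_ℂ).re = r - (βlo + lam) := by
      rw [e2, inner_sub_right, inner_smul_right, hψψ, mul_one, ← hcAdef, Complex.sub_re,
        Complex.ofReal_re, hrdef]
    have e4 : (⟪ψ, (S * S) ψ⟫_ℂ).re = ‖S ψ‖ ^ 2 := by
      have hSS : ⟪S ψ, S ψ⟫_ℂ = ((‖S ψ‖ : ℂ)) ^ 2 := inner_self_eq_norm_sq_to_K (S ψ)
      rw [happ, ← hsymS ψ (S ψ), hSS, ← Complex.ofReal_pow, Complex.ofReal_re]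
    nlinarith [sq_nonneg ‖S ψ‖]
  -- upper bound on r
  have hrhi : r ≤ βhi + lam := by
    set s : ℝ → ℝ := fun t => Real.sqrt ((βhi + lam) - g t) with hsdef
    have hsc : Continuous s := by
      simp only [hsdef]; fun_prop
    set S := cfc s D with hSdef
    have hsymS : ∀ v w : H, ⟪S v, w⟫_ℂ = ⟪v, S w⟫_ℂ :=
      fun v w => (cfc_predicate s D : IsSelfAdjoint S).isSymmetric v w
    have hS2 : S * S = algebraMap ℝ (H →L[ℂ] H) (βhi + lam) - A := by
      calc S * S = cfc (fun t => s t * s t) D :=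
            (cfc_mul s s D hsc.continuousOn hsc.continuousOn).symm
        _ = cfc (fun t => (βhi + lam) - g t) D :=
            cfc_congr (fun t _ => Real.mul_self_sqrt (by have := hghi t; linarith))
        _ = cfc (fun _ => βhi + lam) D - cfc g D :=
            cfc_sub (fun _ => βhi + lam) g D continuousOn_const hgc.continuousOn
        _ = algebraMap ℝ (H →L[ℂ] H) (βhi + lam) - A := by rw [cfc_const (βhi + lam) D hD]
    have e2 : (S * S) ψ = ((βhi + lam : ℝ) : ℂ) • ψ - A ψ := by
      rw [hS2, ContinuousLinearMap.sub_apply, hAlg]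
    have e3 : (⟪ψ, (S * S) ψ⟫_ℂ).re = (βhi + lam) - r := by
      rw [e2, inner_sub_right, inner_smul_right, hψψ, mul_one, ← hcAdef, Complex.sub_re,
        Complex.ofReal_re, hrdef]
    have e4 : (⟪ψ, (S * S) ψ⟫_ℂ).re = ‖S ψ‖ ^ 2 := by
      have hSS : ⟪S ψ, S ψ⟫_ℂ = ((‖S ψ‖ : ℂ)) ^ 2 := inner_self_eq_norm_sq_to_K (S ψ)
      rw [happ, ← hsymS ψ (S ψ), hSS, ← Complex.ofReal_pow, Complex.ofReal_re]
    nlinarith [sq_nonneg ‖S ψ‖]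
  -- decompositions
  set α := ⟪ψ, u⟫_ℂ with hαdef
  set u' := u - α • ψ with hu'def
  set φ' := φ - (γ : ℂ) • ψ with hφ'def
  have hu'K : ⟪ψ, u'⟫_ℂ = 0 := by
    rw [hu'def, inner_sub_right, inner_smul_right, hψψ, mul_one, ← hαdef, sub_self]
  have hφ'K : ⟪ψ, φ'⟫_ℂ = 0 := by
    rw [hφ'def, inner_sub_right, inner_smul_right, hψψ, mul_one, hφψ, sub_self]
  set x := A φ' with hxdef
  have hxK : ⟪ψ, x⟫_ℂ = 0 := hKA φ' hφ'K
  set qu := (⟪u', Dinv u'⟫_ℂ).re with hqudef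
  set qφ := (⟪φ', Dinv φ'⟫_ℂ).re with hqφdef
  set qx := (⟪x, Dinv x⟫_ℂ).re with hqxdef
  have hqu0 : 0 ≤ qu := hposK u' hu'K
  have hqφ0 : 0 ≤ qφ := hposK φ' hφ'K
  -- the key operator inequality: qx ≤ (βhi+lam)^2 qφ
  have hqx : qx ≤ (βhi + lam) ^ 2 * qφ := by
    set sR : ℝ → ℝ := fun t => Real.sqrt ((βhi + lam) * (βhi + lam) - g t * g t) with hsRdef
    have hsRc : Continuous sR := by
      simp only [hsRdef]; fun_prop
    set R := cfc sR D with hRdef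
    have hR_sa : IsSelfAdjoint R := cfc_predicate sR D
    have hsymR : ∀ v w : H, ⟪R v, w⟫_ℂ = ⟪v, R w⟫_ℂ := fun v w => hR_sa.isSymmetric v w
    have hRD : R * D = D * R := gspb_cfc_comm D hD sR hsRc
    have hRDinv : R * Dinv = Dinv * R := gspb_comm_inv D Dinv R h1 h2 hRD
    have hKR : ∀ v, ⟪ψ, v⟫_ℂ = 0 → ⟪ψ, R v⟫_ℂ = 0 :=
      gspb_invariant D ψ hψ lamD hlamD hDψ' ω hω hgap R hR_sa hRD
    have hR2 : R * R = algebraMap ℝ (H →L[ℂ] H) ((βhi + lam) * (βhi + lam)) - A * A := by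
      calc R * R = cfc (fun t => sR t * sR t) D :=
            (cfc_mul sR sR D hsRc.continuousOn hsRc.continuousOn).symm
        _ = cfc (fun t => (βhi + lam) * (βhi + lam) - g t * g t) D :=
            cfc_congr (fun t _ => Real.mul_self_sqrt
              (by nlinarith [hglo t, hghi t]))
        _ = cfc (fun _ => (βhi + lam) * (βhi + lam)) D - cfc (fun t => g t * g t) D :=
            cfc_sub _ _ D continuousOn_const (by fun_prop)
        _ = algebraMap ℝ (H →L[ℂ] H) ((βhi + lam) * (βhi + lam)) - A * A := by
            rw [cfc_const _ D hD, cfc_mul g g D hgc.continuousOn hgc.continuousOn]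
    have c1 : A (Dinv (A φ')) = Dinv (A (A φ')) := by
      have := congrArg (fun S : H →L[ℂ] H => S (A φ')) hADinv
      simpa [ContinuousLinearMap.mul_apply] using this
    have e1 : ⟪x, Dinv x⟫_ℂ = ⟪φ', Dinv (A (A φ'))⟫_ℂ := by
      rw [hxdef, hsymA φ' (Dinv (A φ')), c1]
    have hR2app : R (R φ') = (((βhi + lam) * (βhi + lam) : ℝ) : ℂ) • φ' - A (A φ') := by
      have h := congrArg (fun S : H →L[ℂ] H => S φ') hR2
      simp only [ContinuousLinearMap.mul_apply, ContinuousLinearMap.sub_apply] at h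
      rw [h, hAlg]
    have e3 : ⟪φ', Dinv (R (R φ'))⟫_ℂ = ⟪R φ', Dinv (R φ')⟫_ℂ := by
      have c2 : Dinv (R (R φ')) = R (Dinv (R φ')) := by
        have := congrArg (fun S : H →L[ℂ] H => S (R φ')) hRDinv
        simpa [ContinuousLinearMap.mul_apply] using this.symm
      rw [c2, ← hsymR φ' (Dinv (R φ'))]
    have e4 : 0 ≤ (⟪R φ', Dinv (R φ')⟫_ℂ).re := hposK _ (hKR φ' hφ'K)
    have e5 : (⟪φ', Dinv (R (R φ'))⟫_ℂ).re =
        (βhi + lam) * (βhi + lam) * qφ - qx := by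
      rw [hR2app, map_sub, map_smul, inner_sub_right, inner_smul_right, ← e1, Complex.sub_re,
        Complex.re_ofReal_mul, ← hqφdef, ← hqxdef]
    rw [e3] at e5
    nlinarith [e4, e5]
  -- Cauchy–Schwarz
  have hpos : ∀ a b : ℂ, 0 ≤ (⟪a • x + b • u', Dinv (a • x + b • u')⟫_ℂ).re := by
    intro a b
    exact hposK _ (by simp [inner_add_right, inner_smul_right, hxK, hu'K])
  have hcs := gspb_cs Dinv hsymDinv x u' hpos
  -- the constraint
  have hc0 : ⟪Dinv (A φ), u⟫_ℂ = 0 := by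
    have hAform : A = cfc f D + algebraMap ℝ (H →L[ℂ] H) lam := by
      rw [hAdef, hgdef]
      exact cfc_add_const lam f D hf.continuousOn hD
    have : A φ = cfc f D φ + (lam : ℂ) • φ := by
      rw [hAform, ContinuousLinearMap.add_apply, hAlg]
    rw [this]
    exact hconstraint
  have hφd : φ = (γ : ℂ) • ψ + φ' := by rw [hφ'def]; abel
  have hud : u = α • ψ + u' := by rw [hu'def]; abel
  have hz : ⟪Dinv (A φ'), ψ⟫_ℂ = 0 := by
    have hm := hKDinv (A φ') (hKA φ' hφ'K)
    rw [← inner_conj_symm, hm, map_zero]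
  set w := ⟪Dinv (A φ'), u'⟫_ℂ with hwdef
  have hkey : ((γ : ℂ) * (r : ℂ) * ((lamD : ℂ))⁻¹) * α + w = 0 := by
    have expand : ⟪Dinv (A φ), u⟫_ℂ = ((γ : ℂ) * (r : ℂ) * ((lamD : ℂ))⁻¹) * α + w := by
      conv_lhs => rw [hφd, hud]
      simp only [map_add, map_smul, hAψ, ← hcAdef, hDinvψ, inner_add_left, inner_add_right,
        inner_smul_left, inner_smul_right, hψψ, hu'K, hz, ← hwdef, mul_one, mul_zero,
        add_zero, zero_add]
      rw [map_inv₀, Complex.conj_ofReal, Complex.conj_ofReal, hcA_conj, ← hcA_re]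
      ring
    rw [← expand]
    exact hc0
  have hr0 : (0:ℝ) < r := lt_of_lt_of_le hlam' hrlo
  have hγℂ : ((γ : ℂ)) ≠ 0 := Complex.ofReal_ne_zero.mpr hγ.ne'
  have hrℂ : ((r : ℝ) : ℂ) ≠ 0 := Complex.ofReal_ne_zero.mpr hr0.ne'
  have hlamDℂ : ((lamD : ℂ)) ≠ 0 := Complex.ofReal_ne_zero.mpr hlamD.ne
  have hκ : ((γ : ℂ) * (r : ℂ) * ((lamD : ℂ))⁻¹) ≠ 0 := by
    exact mul_ne_zero (mul_ne_zero hγℂ hrℂ) (inv_ne_zero hlamDℂ)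
  have hαeq : α = -w / ((γ : ℂ) * (r : ℂ) * ((lamD : ℂ))⁻¹) := by
    rw [eq_div_iff hκ]
    linear_combination hkey
  have hnormα : ‖α‖ = ‖w‖ * |lamD| / (γ * r) := by
    rw [hαeq, norm_div, norm_neg, norm_mul, norm_mul, norm_inv]
    rw [Complex.norm_real, Complex.norm_real, Complex.norm_real]
    rw [Real.norm_eq_abs, Real.norm_eq_abs, Real.norm_eq_abs]
    rw [abs_of_pos hγ, abs_of_pos hr0]
    field_simp
    try ring
  -- bound on w
  have hwcs : ‖w‖ ≤ (βhi + lam) * Real.sqrt (qu * qφ) := by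
    have hwx : w = ⟪x, Dinv u'⟫_ℂ := by rw [hwdef, hsymDinv, hxdef]
    have h5 : ‖w‖ ^ 2 ≤ ((βhi + lam) ^ 2 * qφ) * qu := by
      rw [hwx]
      calc ‖⟪x, Dinv u'⟫_ℂ‖ ^ 2 ≤ qx * qu := hcs
        _ ≤ ((βhi + lam) ^ 2 * qφ) * qu := mul_le_mul_of_nonneg_right hqx hqu0
    calc ‖w‖ = Real.sqrt (‖w‖ ^ 2) := (Real.sqrt_sq (norm_nonneg w)).symm
      _ ≤ Real.sqrt (((βhi + lam) ^ 2 * qφ) * qu) := Real.sqrt_le_sqrt h5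
      _ = (βhi + lam) * Real.sqrt (qu * qφ) := by
          rw [show ((βhi + lam) ^ 2 * qφ) * qu = (βhi + lam) ^ 2 * (qu * qφ) by ring,
            Real.sqrt_mul (sq_nonneg _), Real.sqrt_sq hlam''.le]
  -- final assembly
  rw [hnormα]
  calc ‖w‖ * |lamD| / (γ * r)
      ≤ ((βhi + lam) * Real.sqrt (qu * qφ)) * |lamD| / (γ * (βlo + lam)) :=
        div_le_div₀ (by positivity)
          (mul_le_mul_of_nonneg_right hwcs (abs_nonneg lamD))
          (mul_pos hγ hlam')
          (mul_le_mul_of_nonneg_left hrlo hγ.le)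
      _ = (|lamD| * (βhi + lam)) / ((βlo + lam) * γ) * Real.sqrt (qu * qφ) := by
        ring
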